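/- arXiv:1105.1277 — 8 statements merged into one kernel-verified Lean document; each statement's English description precedes it below -/
import Mathlib

section
/- Let (N₁,γ₁) and (N₂,γ₂) be two ch-sets with cones, where γ₂ = (a₂,b₂,c₂), and let g be a continuous map defined on N₁ such that for any q*, q** ∈ N₁ with q* ≠ q** and Q_{γ₁}(q* − q**) ≥ 0 one has Q_{γ₂}(g(q*) − g(q**)) > 0. Then for every horizontal disc h in (N₁,γ₁) the map x ↦ π_x(g(h(x))) is injective on B̄_u(x₁,r_u¹). -/
open Metric Set

noncomputable section

abbrev Eu (n : ℕ) : Type := EuclideanSpace ℝ (Fin n)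

abbrev Pt (u s c : ℕ) : Type := Eu u × Eu s × Eu c

/-- The quadratic form `Q_γ(q) = a‖x‖² + b‖y‖² + c‖θ‖²` for `γ = (a,b,c)`, `q = (x,y,θ)`. -/
def Qf {u s c : ℕ} (γ : ℝ × ℝ × ℝ) (q : Pt u s c) : ℝ :=
  γ.1 * ‖q.1‖ ^ 2 + γ.2.1 * ‖q.2.1‖ ^ 2 + γ.2.2 * ‖q.2.2‖ ^ 2

/-- The ch-set `N(p,r_u,r_s,r_c) = B̄_u(x,r_u) × B̄_s(y,r_s) × B̄_c(θ,r_c)`. -/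
def chSet {u s c : ℕ} (p : Pt u s c) (R : ℝ × ℝ × ℝ) : Set (Pt u s c) :=
  closedBall p.1 R.1 ×ˢ closedBall p.2.1 R.2.1 ×ˢ closedBall p.2.2 R.2.2

/-- The exit set `N⁻`. -/
def chExit {u s c : ℕ} (p : Pt u s c) (R : ℝ × ℝ × ℝ) : Set (Pt u s c) :=
  sphere p.1 R.1 ×ˢ closedBall p.2.1 R.2.1 ×ˢ closedBall p.2.2 R.2.2

/-- The entry set `N⁺`. -/
def chEntry {u s c : ℕ} (p : Pt u s c) (R : ℝ × ℝ × ℝ) : Set (Pt u s c) :=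
  closedBall p.1 R.1 ×ˢ (ball p.2.1 R.2.1 ×ˢ ball p.2.2 R.2.2)ᶜ

/-- `γ = (a,b,c)` is an admissible cone parameter: `a > 0`, `b,c < 0`. -/
def ConePar (γ : ℝ × ℝ × ℝ) : Prop := 0 < γ.1 ∧ γ.2.1 < 0 ∧ γ.2.2 < 0

/-- `N₁ = N(p₁,R₁)` `g`-covers `N₂ = N(p₂,R₂)`. -/
def Covers {u s c : ℕ} (g : Pt u s c → Pt u s c) (p₁ : Pt u s c) (R₁ : ℝ × ℝ × ℝ)
    (p₂ : Pt u s c) (R₂ : ℝ × ℝ × ℝ) : Prop :=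
  g p₁ ∈ interior (chSet p₂ R₂) ∧
  (∀ q ∈ chExit p₁ R₁, (g q).1 ∉ closedBall p₂.1 R₂.1) ∧
  (∀ q ∈ chSet p₁ R₁, g q ∉ chEntry p₂ R₂)

/-- `h` is a horizontal disc in the ch-set with cones `(N(p,R), γ)`. -/
def HorDisc {u s c : ℕ} (h : Eu u → Pt u s c) (p : Pt u s c) (R : ℝ × ℝ × ℝ)
    (γ : ℝ × ℝ × ℝ) : Prop :=
  ContinuousOn h (closedBall p.1 R.1) ∧
  (∀ x ∈ closedBall p.1 R.1, h x ∈ chSet p R) ∧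
  (∀ x ∈ closedBall p.1 R.1, (h x).1 = x) ∧
  (∀ x₁ ∈ closedBall p.1 R.1, ∀ x₂ ∈ closedBall p.1 R.1, 0 ≤ Qf γ (h x₁ - h x₂))

/-- If the cone condition holds for `g` between the ch-sets with cones `(N₁,γ₁)` and `(N₂,γ₂)`,
then for any horizontal disc `h` in `(N₁,γ₁)` the map `x ↦ π_x (g (h x))` is injective
on `B̄_u(x₁, r_u¹)`. -/
theorem stmt1 {u s c : ℕ}
    (p₁ p₂ : Pt u s c) (R₁ R₂ : ℝ × ℝ × ℝ)
    (hR₁ : 0 < R₁.1 ∧ 0 < R₁.2.1 ∧ 0 < R₁.2.2)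
    (hR₂ : 0 < R₂.1 ∧ 0 < R₂.2.1 ∧ 0 < R₂.2.2)
    (γ₁ γ₂ : ℝ × ℝ × ℝ) (hγ₁ : ConePar γ₁) (hγ₂ : ConePar γ₂)
    (g : Pt u s c → Pt u s c) (hg : ContinuousOn g (chSet p₁ R₁))
    (hcone : ∀ q₁ ∈ chSet p₁ R₁, ∀ q₂ ∈ chSet p₁ R₁, q₁ ≠ q₂ →
      0 ≤ Qf γ₁ (q₁ - q₂) → 0 < Qf γ₂ (g q₁ - g q₂))
    (h : Eu u → Pt u s c) (hh : HorDisc h p₁ R₁ γ₁) :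
    Set.InjOn (fun x => (g (h x)).1) (closedBall p₁.1 R₁.1) := by
  intro x₁ hx₁ x₂ hx₂ heq
  by_contra hne
  obtain ⟨hcont, hmem, hproj, hQ⟩ := hh
  have hne' : h x₁ ≠ h x₂ := fun hEq => hne (by
    rw [← hproj x₁ hx₁, ← hproj x₂ hx₂, hEq])
  have hpos := hcone (h x₁) (hmem x₁ hx₁) (h x₂) (hmem x₂ hx₂) hne' (hQ x₁ hx₁ x₂ hx₂)
  simp only at heq
  have h1 : (g (h x₁) - g (h x₂)).1 = 0 := by
    simp [Prod.sub_def, heq]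
  have : Qf γ₂ (g (h x₁) - g (h x₂)) ≤ 0 := by
    unfold Qf
    rw [h1, norm_zero]
    have hb := hγ₂.2.1
    have hc := hγ₂.2.2
    have := sq_nonneg ‖(g (h x₁) - g (h x₂)).2.1‖
    have := sq_nonneg ‖(g (h x₁) - g (h x₂)).2.2‖
    nlinarith
  linarith
end
end

section
/- Let γ = (a,b,c) ∈ ℝ³ with a > 0 and b, c < 0, let r > 0 and x₀ ∈ ℝᵘ, and let h : B̄_u(x₀,r) → ℝᵘ×ℝˢ×ℝᶜ be a map with π_x(h(v)) = v for all v and Q_γ(h(v*) − h(v**)) > 0 for all v* ≠ v**. Then for all v*, v** one has min(−b,−c)·‖π_{(y,θ)}h(v*) − π_{(y,θ)}h(v**)‖² ≤ a·‖v* − v**‖²; in particular h is Lipschitz continuous with Lipschitz constant at most √(1 + a/min(−b,−c)). -/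
open Metric Set

noncomputable section

/-- A map `h` on `B̄_u(x₀,r)` with `π_x ∘ h = id` whose increments lie in the open horizontal
cone `Q_γ > 0` satisfies `min(-b,-c)·‖π_{(y,θ)}Δh‖² ≤ a·‖Δv‖²`; in particular it is
Lipschitz with constant `√(1 + a/min(-b,-c))`. -/
theorem stmt3 {u s c : ℕ} (γ : ℝ × ℝ × ℝ) (hγ : ConePar γ) (r : ℝ) (hr : 0 < r)
    (x₀ : Eu u) (h : Eu u → Pt u s c)
    (hproj : ∀ v ∈ closedBall x₀ r, (h v).1 = v)
    (hcone : ∀ v₁ ∈ closedBall x₀ r, ∀ v₂ ∈ closedBall x₀ r, v₁ ≠ v₂ →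
      0 < Qf γ (h v₁ - h v₂)) :
    (∀ v₁ ∈ closedBall x₀ r, ∀ v₂ ∈ closedBall x₀ r,
      min (-γ.2.1) (-γ.2.2) *
          (‖(h v₁).2.1 - (h v₂).2.1‖ ^ 2 + ‖(h v₁).2.2 - (h v₂).2.2‖ ^ 2) ≤
        γ.1 * ‖v₁ - v₂‖ ^ 2) ∧
    LipschitzOnWith
      (Real.toNNReal (Real.sqrt (1 + γ.1 / min (-γ.2.1) (-γ.2.2)))) h (closedBall x₀ r) := by
  obtain ⟨ha, hb, hc⟩ := hγ
  set a := γ.1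
  set m := min (-γ.2.1) (-γ.2.2) with hm
  have hm0 : 0 < m := lt_min (by linarith) (by linarith)
  have key : ∀ v₁ ∈ closedBall x₀ r, ∀ v₂ ∈ closedBall x₀ r,
      m * (‖(h v₁).2.1 - (h v₂).2.1‖ ^ 2 + ‖(h v₁).2.2 - (h v₂).2.2‖ ^ 2) ≤
        a * ‖v₁ - v₂‖ ^ 2 := by
    intro v₁ hv₁ v₂ hv₂
    rcases eq_or_ne v₁ v₂ with rfl | hne
    · simp
    · have hQ := hcone v₁ hv₁ v₂ hv₂ hne
      have h1 : (h v₁ - h v₂).1 = v₁ - v₂ := by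
        simp [Prod.fst_sub, hproj v₁ hv₁, hproj v₂ hv₂]
      unfold Qf at hQ
      rw [h1] at hQ
      have e2 : (h v₁ - h v₂).2.1 = (h v₁).2.1 - (h v₂).2.1 := rfl
      have e3 : (h v₁ - h v₂).2.2 = (h v₁).2.2 - (h v₂).2.2 := rfl
      rw [e2, e3] at hQ
      have hmb : m ≤ -γ.2.1 := min_le_left _ _
      have hmc : m ≤ -γ.2.2 := min_le_right _ _
      have p1 : (0:ℝ) ≤ ‖(h v₁).2.1 - (h v₂).2.1‖ ^ 2 := sq_nonneg _
      have p2 : (0:ℝ) ≤ ‖(h v₁).2.2 - (h v₂).2.2‖ ^ 2 := sq_nonneg _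
      nlinarith
  refine ⟨key, ?_⟩
  rw [lipschitzOnWith_iff_dist_le_mul]
  intro v₁ hv₁ v₂ hv₂
  have hK : (0:ℝ) ≤ Real.sqrt (1 + a / m) := Real.sqrt_nonneg _
  rw [Real.coe_toNNReal _ hK]
  have hk := key v₁ hv₁ v₂ hv₂
  have hd : dist v₁ v₂ = ‖v₁ - v₂‖ := dist_eq_norm _ _
  have h1am : (0:ℝ) ≤ 1 + a / m := by positivity
  -- bound each component
  have bound : ∀ w : ℝ, 0 ≤ w → w ^ 2 ≤ (1 + a / m) * ‖v₁ - v₂‖ ^ 2 →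
      w ≤ Real.sqrt (1 + a / m) * dist v₁ v₂ := by
    intro w hw hw2
    have : w = Real.sqrt (w ^ 2) := (Real.sqrt_sq hw).symm
    rw [this, hd]
    calc Real.sqrt (w ^ 2) ≤ Real.sqrt ((1 + a / m) * ‖v₁ - v₂‖ ^ 2) :=
          Real.sqrt_le_sqrt hw2
      _ = Real.sqrt (1 + a / m) * ‖v₁ - v₂‖ := by
          rw [Real.sqrt_mul h1am, Real.sqrt_sq (norm_nonneg _)]
  have hx : dist (h v₁).1 (h v₂).1 ≤ Real.sqrt (1 + a / m) * dist v₁ v₂ := by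
    rw [hproj v₁ hv₁, hproj v₂ hv₂, dist_eq_norm]
    apply bound _ (norm_nonneg _)
    nlinarith [sq_nonneg ‖v₁ - v₂‖, div_nonneg ha.le hm0.le]
  have hyb : ‖(h v₁).2.1 - (h v₂).2.1‖ ^ 2 ≤ (a / m) * ‖v₁ - v₂‖ ^ 2 := by
    rw [div_mul_eq_mul_div, le_div_iff₀ hm0]
    nlinarith [sq_nonneg ‖(h v₁).2.2 - (h v₂).2.2‖]
  have hcb : ‖(h v₁).2.2 - (h v₂).2.2‖ ^ 2 ≤ (a / m) * ‖v₁ - v₂‖ ^ 2 := by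
    rw [div_mul_eq_mul_div, le_div_iff₀ hm0]
    nlinarith [sq_nonneg ‖(h v₁).2.1 - (h v₂).2.1‖]
  have hsq : (0:ℝ) ≤ ‖v₁ - v₂‖ ^ 2 := sq_nonneg _
  have hy : dist (h v₁).2.1 (h v₂).2.1 ≤ Real.sqrt (1 + a / m) * dist v₁ v₂ := by
    rw [dist_eq_norm]
    exact bound _ (norm_nonneg _) (by nlinarith)
  have hθ : dist (h v₁).2.2 (h v₂).2.2 ≤ Real.sqrt (1 + a / m) * dist v₁ v₂ := by
    rw [dist_eq_norm]
    exact bound _ (norm_nonneg _) (by nlinarith)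
  calc dist (h v₁) (h v₂)
      = max (dist (h v₁).1 (h v₂).1) (max (dist (h v₁).2.1 (h v₂).2.1)
          (dist (h v₁).2.2 (h v₂).2.2)) := by rw [Prod.dist_eq, Prod.dist_eq]
    _ ≤ Real.sqrt (1 + a / m) * dist v₁ v₂ := max_le hx (max_le hy hθ)
end
end

section
/- Let r > 0 and let w^s : B̄_s(0,r) → B_u(0,r) and w^u : B̄_u(0,r) → B_s(0,r) be continuous maps (B̄ denotes closed and B open balls in ℝˢ and ℝᵘ). Let a_f > 0 > b_f and a_b < 0 < b_b be real numbers with |a_f| > |a_b| and |b_f| < |b_b|. Assume that for all y* ≠ y** in B̄_s(0,r): a_f·‖w^s(y*) − w^s(y**)‖² + b_f·‖y* − y**‖² < 0, and for all x* ≠ x** in B̄_u(0,r): a_b·‖x* − x**‖² + b_b·‖w^u(x*) − w^u(x**)‖² < 0. Then there exists exactly one pair (x₀,y₀) ∈ B_u(0,r)×B_s(0,r) such that x₀ = w^s(y₀) and y₀ = w^u(x₀). -/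
open Metric Set

noncomputable section

/-- Given contracting-graph conditions on `w^s : B̄_s(0,r) → B_u(0,r)` and
`w^u : B̄_u(0,r) → B_s(0,r)` coming from the forward and backward cone conditions,
there is exactly one pair `(x₀,y₀) ∈ B_u(0,r) × B_s(0,r)` with `x₀ = w^s(y₀)` and
`y₀ = w^u(x₀)`. -/
theorem stmt7 {u s : ℕ} (r : ℝ) (hr : 0 < r)
    (ws : Eu s → Eu u) (wu : Eu u → Eu s)
    (hwsc : ContinuousOn ws (closedBall 0 r))
    (hwsm : MapsTo ws (closedBall 0 r) (ball 0 r))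
    (hwuc : ContinuousOn wu (closedBall 0 r))
    (hwum : MapsTo wu (closedBall 0 r) (ball 0 r))
    (af bf ab bb : ℝ) (haf : 0 < af) (hbf : bf < 0) (hab : ab < 0) (hbb : 0 < bb)
    (hA : |ab| < |af|) (hB : |bf| < |bb|)
    (hs : ∀ y₁ ∈ closedBall (0 : Eu s) r, ∀ y₂ ∈ closedBall (0 : Eu s) r, y₁ ≠ y₂ →
      af * ‖ws y₁ - ws y₂‖ ^ 2 + bf * ‖y₁ - y₂‖ ^ 2 < 0)
    (hu : ∀ x₁ ∈ closedBall (0 : Eu u) r, ∀ x₂ ∈ closedBall (0 : Eu u) r, x₁ ≠ x₂ →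
      ab * ‖x₁ - x₂‖ ^ 2 + bb * ‖wu x₁ - wu x₂‖ ^ 2 < 0) :
    ∃! p : Eu u × Eu s, p.1 ∈ ball (0 : Eu u) r ∧ p.2 ∈ ball (0 : Eu s) r ∧
      p.1 = ws p.2 ∧ p.2 = wu p.1 := by
  have hab' : |ab| = -ab := abs_of_neg hab
  have hbf' : |bf| = -bf := abs_of_neg hbf
  have haf' : |af| = af := abs_of_pos haf
  have hbb' : |bb| = bb := abs_of_pos hbb
  -- Lipschitz bounds
  have hws : ∀ y₁ ∈ closedBall (0 : Eu s) r, ∀ y₂ ∈ closedBall (0 : Eu s) r,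
      ‖ws y₁ - ws y₂‖ ≤ Real.sqrt (-bf / af) * ‖y₁ - y₂‖ := by
    intro y₁ h₁ y₂ h₂
    rcases eq_or_ne y₁ y₂ with rfl | hne
    · simp
    · have h := hs y₁ h₁ y₂ h₂ hne
      have h2 : ‖ws y₁ - ws y₂‖ ^ 2 ≤ (-bf / af) * ‖y₁ - y₂‖ ^ 2 := by
        rw [div_mul_eq_mul_div, le_div_iff₀ haf]
        nlinarith
      calc ‖ws y₁ - ws y₂‖ = Real.sqrt (‖ws y₁ - ws y₂‖ ^ 2) := by
              rw [Real.sqrt_sq (norm_nonneg _)]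
        _ ≤ Real.sqrt ((-bf / af) * ‖y₁ - y₂‖ ^ 2) := Real.sqrt_le_sqrt h2
        _ = Real.sqrt (-bf / af) * ‖y₁ - y₂‖ := by
              rw [Real.sqrt_mul (div_nonneg (by linarith) haf.le), Real.sqrt_sq (norm_nonneg _)]
  have hwu : ∀ x₁ ∈ closedBall (0 : Eu u) r, ∀ x₂ ∈ closedBall (0 : Eu u) r,
      ‖wu x₁ - wu x₂‖ ≤ Real.sqrt (-ab / bb) * ‖x₁ - x₂‖ := by
    intro x₁ h₁ x₂ h₂
    rcases eq_or_ne x₁ x₂ with rfl | hne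
    · simp
    · have h := hu x₁ h₁ x₂ h₂ hne
      have h2 : ‖wu x₁ - wu x₂‖ ^ 2 ≤ (-ab / bb) * ‖x₁ - x₂‖ ^ 2 := by
        rw [div_mul_eq_mul_div, le_div_iff₀ hbb]
        nlinarith
      calc ‖wu x₁ - wu x₂‖ = Real.sqrt (‖wu x₁ - wu x₂‖ ^ 2) := by
              rw [Real.sqrt_sq (norm_nonneg _)]
        _ ≤ Real.sqrt ((-ab / bb) * ‖x₁ - x₂‖ ^ 2) := Real.sqrt_le_sqrt h2
        _ = Real.sqrt (-ab / bb) * ‖x₁ - x₂‖ := by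
              rw [Real.sqrt_mul (div_nonneg (by linarith) hbb.le), Real.sqrt_sq (norm_nonneg _)]
  -- the composite map on the closed ball in Eu s
  set C : Set (Eu s) := closedBall 0 r with hC
  haveI : Nonempty C := ⟨⟨0, by simp [hC, hr.le]⟩⟩
  haveI : CompleteSpace C := IsComplete.completeSpace_coe (IsClosed.isComplete isClosed_closedBall)
  have hmem : ∀ y : C, wu (ws y) ∈ C := fun y =>
    ball_subset_closedBall (hwum (ball_subset_closedBall (hwsm y.2)))
  set f : C → C := fun y => ⟨wu (ws y), hmem y⟩ with hf
  set K : NNReal := (Real.sqrt (-ab / bb) * Real.sqrt (-bf / af)).toNNReal with hK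
  have hKR : (K : ℝ) = Real.sqrt (-ab / bb) * Real.sqrt (-bf / af) := by
    rw [hK, Real.coe_toNNReal _ (mul_nonneg (Real.sqrt_nonneg _) (Real.sqrt_nonneg _))]
  have hcontr : ContractingWith K f := by
    constructor
    · rw [← NNReal.coe_lt_coe, NNReal.coe_one, hKR, ← Real.sqrt_mul (div_nonneg (by linarith) hbb.le),
        show (1 : ℝ) = Real.sqrt 1 by simp]
      apply Real.sqrt_lt_sqrt (mul_nonneg (div_nonneg (by linarith) hbb.le) (div_nonneg (by linarith) haf.le))
      rw [div_mul_div_comm, div_lt_one (by positivity)]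
      nlinarith [hab'.symm.trans_lt (hA.trans_eq haf'), hbf'.symm.trans_lt (hB.trans_eq hbb')]
    · apply LipschitzWith.of_dist_le_mul
      intro y₁ y₂
      have h₁ : ws y₁.1 ∈ closedBall (0 : Eu u) r := ball_subset_closedBall (hwsm y₁.2)
      have h₂ : ws y₂.1 ∈ closedBall (0 : Eu u) r := ball_subset_closedBall (hwsm y₂.2)
      have := hwu _ h₁ _ h₂
      have h3 := hws y₁.1 y₁.2 y₂.1 y₂.2
      have hd : dist (f y₁) (f y₂) = ‖wu (ws y₁.1) - wu (ws y₂.1)‖ := by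
        rw [Subtype.dist_eq, dist_eq_norm]
      have hd2 : dist y₁ y₂ = ‖y₁.1 - y₂.1‖ := by
        rw [Subtype.dist_eq, dist_eq_norm]
      rw [hd, hd2, hKR]
      calc ‖wu (ws y₁.1) - wu (ws y₂.1)‖ ≤ Real.sqrt (-ab / bb) * ‖ws y₁.1 - ws y₂.1‖ := this
        _ ≤ Real.sqrt (-ab / bb) * (Real.sqrt (-bf / af) * ‖y₁.1 - y₂.1‖) := by
              apply mul_le_mul_of_nonneg_left h3 (Real.sqrt_nonneg _)
        _ = Real.sqrt (-ab / bb) * Real.sqrt (-bf / af) * ‖y₁.1 - y₂.1‖ := by ring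
  set y₀ : C := ContractingWith.fixedPoint f hcontr with hy₀
  have hfix : wu (ws y₀.1) = y₀.1 :=
    congrArg Subtype.val (hcontr.fixedPoint_isFixedPt)
  refine ⟨(ws y₀.1, y₀.1), ⟨hwsm y₀.2, ?_, rfl, hfix.symm⟩, ?_⟩
  · rw [← hfix]; exact hwum (ball_subset_closedBall (hwsm y₀.2))
  · rintro ⟨x, y⟩ ⟨hx, hy, hxy, hyx⟩
    have hyC : y ∈ C := ball_subset_closedBall hy
    have hfp : Function.IsFixedPt f ⟨y, hyC⟩ := by
      apply Subtype.ext
      show wu (ws y) = y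
      rw [← hxy, ← hyx]
    have := hcontr.fixedPoint_unique hfp
    have hyy : y = y₀.1 := congrArg Subtype.val this
    simp only [Prod.mk.injEq]
    exact ⟨by rw [← hyy]; exact hxy, hyy⟩
end
end

section
/- Let γ_f = (a_f, b_f, c_f) with a_f > 0 and b_f, c_f < 0, and γ_b = (a_b, b_b, c_b) with a_b < 0, b_b > 0 and c_b < 0, satisfy a_f + a_b > 0 and b_f + b_b > 0. Let χ : B̄_c → ℝᵘ×ℝˢ be a map such that for all θ*, θ** ∈ B̄_c with θ* ≠ θ** one has Q_{γ_f}((χ(θ*),θ*) − (χ(θ**),θ**)) < 0 and Q_{γ_b}((χ(θ*),θ*) − (χ(θ**),θ**)) < 0. Then for all θ*, θ**: ‖χ(θ*) − χ(θ**)‖² ≤ (−(c_f + c_b)/min(a_f + a_b, b_f + b_b))·‖θ* − θ**‖²; in particular χ is Lipschitz continuous. -/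
open Metric Set

noncomputable section

/-- If the graph `θ ↦ (χ(θ),θ)` lies in the negative cones of both `Q_{γ_f}` and `Q_{γ_b}`,
with `a_f + a_b > 0` and `b_f + b_b > 0`, then `χ` satisfies the quadratic Lipschitz bound
`‖Δχ‖² ≤ (-(c_f+c_b)/min(a_f+a_b, b_f+b_b))·‖Δθ‖²`; in particular `χ` is Lipschitz. -/
theorem stmt8 {u s c : ℕ} (γf γb : ℝ × ℝ × ℝ)
    (haf : 0 < γf.1) (hbf : γf.2.1 < 0) (hcf : γf.2.2 < 0)
    (hab : γb.1 < 0) (hbb : 0 < γb.2.1) (hcb : γb.2.2 < 0)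
    (hsum1 : 0 < γf.1 + γb.1) (hsum2 : 0 < γf.2.1 + γb.2.1)
    (χ : Eu c → Eu u × Eu s)
    (hf : ∀ θ₁ ∈ closedBall (0 : Eu c) 1, ∀ θ₂ ∈ closedBall (0 : Eu c) 1, θ₁ ≠ θ₂ →
      Qf γf (((χ θ₁).1 - (χ θ₂).1, (χ θ₁).2 - (χ θ₂).2, θ₁ - θ₂) : Pt u s c) < 0)
    (hb : ∀ θ₁ ∈ closedBall (0 : Eu c) 1, ∀ θ₂ ∈ closedBall (0 : Eu c) 1, θ₁ ≠ θ₂ →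
      Qf γb (((χ θ₁).1 - (χ θ₂).1, (χ θ₁).2 - (χ θ₂).2, θ₁ - θ₂) : Pt u s c) < 0) :
    (∀ θ₁ ∈ closedBall (0 : Eu c) 1, ∀ θ₂ ∈ closedBall (0 : Eu c) 1,
      ‖(χ θ₁).1 - (χ θ₂).1‖ ^ 2 + ‖(χ θ₁).2 - (χ θ₂).2‖ ^ 2 ≤
        (-(γf.2.2 + γb.2.2) / min (γf.1 + γb.1) (γf.2.1 + γb.2.1)) * ‖θ₁ - θ₂‖ ^ 2) ∧
    LipschitzOnWith
      (Real.toNNReal (Real.sqrt (-(γf.2.2 + γb.2.2) / min (γf.1 + γb.1) (γf.2.1 + γb.2.1))))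
      χ (closedBall 0 1) := by

  set K : ℝ := -(γf.2.2 + γb.2.2) / min (γf.1 + γb.1) (γf.2.1 + γb.2.1) with hK
  have hm : 0 < min (γf.1 + γb.1) (γf.2.1 + γb.2.1) := lt_min hsum1 hsum2
  have hKnn : 0 ≤ K := div_nonneg (by linarith) hm.le
  have key : ∀ θ₁ ∈ closedBall (0 : Eu c) 1, ∀ θ₂ ∈ closedBall (0 : Eu c) 1,
      ‖(χ θ₁).1 - (χ θ₂).1‖ ^ 2 + ‖(χ θ₁).2 - (χ θ₂).2‖ ^ 2 ≤ K * ‖θ₁ - θ₂‖ ^ 2 := by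
    intro θ₁ h1 θ₂ h2
    rcases eq_or_ne θ₁ θ₂ with rfl | hne
    · simp [hKnn, mul_nonneg hKnn (sq_nonneg _)]
    · have Hf := hf θ₁ h1 θ₂ h2 hne
      have Hb := hb θ₁ h1 θ₂ h2 hne
      simp only [Qf] at Hf Hb
      rw [hK, div_mul_eq_mul_div, le_div_iff₀ hm]
      have hX : (0:ℝ) ≤ ‖(χ θ₁).1 - (χ θ₂).1‖ ^ 2 := sq_nonneg _
      have hY : (0:ℝ) ≤ ‖(χ θ₁).2 - (χ θ₂).2‖ ^ 2 := sq_nonneg _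
      have h1' := min_le_left (γf.1 + γb.1) (γf.2.1 + γb.2.1)
      have h2' := min_le_right (γf.1 + γb.1) (γf.2.1 + γb.2.1)
      nlinarith [sq_nonneg ‖θ₁ - θ₂‖]
  refine ⟨key, ?_⟩
  apply LipschitzOnWith.of_dist_le_mul
  intro θ₁ h1 θ₂ h2
  have h := key θ₁ h1 θ₂ h2
  have hd : dist (χ θ₁) (χ θ₂) ^ 2 ≤ K * dist θ₁ θ₂ ^ 2 := by
    rw [Prod.dist_eq]
    rw [dist_eq_norm, dist_eq_norm, dist_eq_norm]
    rcases max_cases ‖(χ θ₁).1 - (χ θ₂).1‖ ‖(χ θ₁).2 - (χ θ₂).2‖ with ⟨he, _⟩ | ⟨he, _⟩ <;>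
      rw [he] <;> nlinarith [sq_nonneg ‖(χ θ₁).1 - (χ θ₂).1‖, sq_nonneg ‖(χ θ₁).2 - (χ θ₂).2‖]
  have := Real.sqrt_le_sqrt hd
  rw [Real.sqrt_sq dist_nonneg, Real.sqrt_mul hKnn, Real.sqrt_sq dist_nonneg] at this
  calc dist (χ θ₁) (χ θ₂) ≤ Real.sqrt K * dist θ₁ θ₂ := this
    _ = ↑(Real.toNNReal (Real.sqrt K)) * dist θ₁ θ₂ := by
        rw [Real.coe_toNNReal _ (Real.sqrt_nonneg _)]
end
end

section
/- Let γ = (a,b,c) ∈ ℝ³ with a ≥ 0 and b, c ≤ 0, and let A : ℝᵘ⁺ˢ⁺ᶜ → ℝᵘ⁺ˢ⁺ᶜ be a linear map with block components A_{ij} (i,j ∈ {1,2,3}, blocks corresponding to the x, y, θ factors) satisfying ‖A_{ij}v‖ ≤ Ā_{ij}‖v‖ and ‖A_{ij}v‖ ≥ A̲_{ij}‖v‖ for all unit vectors v, for some nonnegative constants Ā_{ij}, A̲_{ij}. Define the 3×3 matrix C by c₁₁ = A̲₁₁² − Σ_{k≠1} Ā₁₁Ā₁ₖ, c₂₁ =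 A̲₁₂² − Σ_{k≠2} Ā₁₂Ā₁ₖ, c₃₁ = A̲₁₃² − Σ_{k≠3} Ā₁₃Ā₁ₖ, c₁₂ = Σ_{k=1}³ Ā₂₁Ā₂ₖ, c₂₂ = Σ_{k=1}³ Ā₂₂Ā₂ₖ, c₃₂ = Σ_{k=1}³ Ā₂₃Ā₂ₖ, c₁₃ = Σ_{k=1}³ Ā₃₁Ā₃ₖ, c₂₃ = Σ_{k=1}³ Ā₃₂Ā₃ₖ, c₃₃ = Σ_{k=1}³ Ā₃₃Ā₃ₖ. Then for every p = (p₁,p₂,p₃) ∈ ℝᵘ×ℝˢ×ℝᶜ one has Q_γ(Ap) ≥ Q_{Cγ}(p). -/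
open Metric Set

noncomputable section

/-- The comparison matrix `C` built from block derivative bounds `Ā`, `A̲`
(indices `0,1,2` correspond to the `x`, `y`, `θ` blocks). -/
def Cmat (Abar Alow : Fin 3 → Fin 3 → ℝ) : Matrix (Fin 3) (Fin 3) ℝ :=
  !![Alow 0 0 ^ 2 - (Abar 0 0 * Abar 0 1 + Abar 0 0 * Abar 0 2),
     Abar 1 0 * Abar 1 0 + Abar 1 0 * Abar 1 1 + Abar 1 0 * Abar 1 2,
     Abar 2 0 * Abar 2 0 + Abar 2 0 * Abar 2 1 + Abar 2 0 * Abar 2 2;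
     Alow 0 1 ^ 2 - (Abar 0 1 * Abar 0 0 + Abar 0 1 * Abar 0 2),
     Abar 1 1 * Abar 1 0 + Abar 1 1 * Abar 1 1 + Abar 1 1 * Abar 1 2,
     Abar 2 1 * Abar 2 0 + Abar 2 1 * Abar 2 1 + Abar 2 1 * Abar 2 2;
     Alow 0 2 ^ 2 - (Abar 0 2 * Abar 0 0 + Abar 0 2 * Abar 0 1),
     Abar 1 2 * Abar 1 0 + Abar 1 2 * Abar 1 1 + Abar 1 2 * Abar 1 2,
     Abar 2 2 * Abar 2 0 + Abar 2 2 * Abar 2 1 + Abar 2 2 * Abar 2 2]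

lemma norm_add3_sq_ge {E : Type*} [NormedAddCommGroup E] [InnerProductSpace ℝ E] (u v w : E) :
    ‖u‖ ^ 2 + ‖v‖ ^ 2 + ‖w‖ ^ 2 - 2 * (‖u‖ * ‖v‖ + ‖u‖ * ‖w‖ + ‖v‖ * ‖w‖) ≤ ‖u + v + w‖ ^ 2 := by
  have h1 := norm_add_sq_real (u + v) w
  have h2 := norm_add_sq_real u v
  have j1 := (abs_le.mp (abs_real_inner_le_norm (u + v) w)).1
  have j2 := (abs_le.mp (abs_real_inner_le_norm u v)).1
  have ht : ‖u + v‖ * ‖w‖ ≤ (‖u‖ + ‖v‖) * ‖w‖ :=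
    mul_le_mul_of_nonneg_right (norm_add_le u v) (norm_nonneg w)
  nlinarith [norm_nonneg w, norm_nonneg u, norm_nonneg v]

set_option maxHeartbeats 1000000 in
/-- quadratic form comparison for block linear maps.
If `A` is a block linear map with block norm bounds `Ā_{ij}`, `A̲_{ij}` and `γ = (a,b,c)`
with `a ≥ 0 ≥ b,c`, then `Q_γ(Ap) ≥ Q_{Cγ}(p)` for every `p`. -/
theorem stmt10 {u s c : ℕ} (γ : ℝ × ℝ × ℝ)
    (ha : 0 ≤ γ.1) (hbneg : γ.2.1 ≤ 0) (hcneg : γ.2.2 ≤ 0)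
    (A11 : Eu u →ₗ[ℝ] Eu u) (A12 : Eu s →ₗ[ℝ] Eu u) (A13 : Eu c →ₗ[ℝ] Eu u)
    (A21 : Eu u →ₗ[ℝ] Eu s) (A22 : Eu s →ₗ[ℝ] Eu s) (A23 : Eu c →ₗ[ℝ] Eu s)
    (A31 : Eu u →ₗ[ℝ] Eu c) (A32 : Eu s →ₗ[ℝ] Eu c) (A33 : Eu c →ₗ[ℝ] Eu c)
    (Abar Alow : Fin 3 → Fin 3 → ℝ)
    (hAbarNN : ∀ i j, 0 ≤ Abar i j) (hAlowNN : ∀ i j, 0 ≤ Alow i j)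
    (h11u : ∀ v : Eu u, ‖A11 v‖ ≤ Abar 0 0 * ‖v‖) (h11l : ∀ v : Eu u, Alow 0 0 * ‖v‖ ≤ ‖A11 v‖)
    (h12u : ∀ v : Eu s, ‖A12 v‖ ≤ Abar 0 1 * ‖v‖) (h12l : ∀ v : Eu s, Alow 0 1 * ‖v‖ ≤ ‖A12 v‖)
    (h13u : ∀ v : Eu c, ‖A13 v‖ ≤ Abar 0 2 * ‖v‖) (h13l : ∀ v : Eu c, Alow 0 2 * ‖v‖ ≤ ‖A13 v‖)
    (h21u : ∀ v : Eu u, ‖A21 v‖ ≤ Abar 1 0 * ‖v‖) (h21l : ∀ v : Eu u, Alow 1 0 * ‖v‖ ≤ ‖A21 v‖)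
    (h22u : ∀ v : Eu s, ‖A22 v‖ ≤ Abar 1 1 * ‖v‖) (h22l : ∀ v : Eu s, Alow 1 1 * ‖v‖ ≤ ‖A22 v‖)
    (h23u : ∀ v : Eu c, ‖A23 v‖ ≤ Abar 1 2 * ‖v‖) (h23l : ∀ v : Eu c, Alow 1 2 * ‖v‖ ≤ ‖A23 v‖)
    (h31u : ∀ v : Eu u, ‖A31 v‖ ≤ Abar 2 0 * ‖v‖) (h31l : ∀ v : Eu u, Alow 2 0 * ‖v‖ ≤ ‖A31 v‖)
    (h32u : ∀ v : Eu s, ‖A32 v‖ ≤ Abar 2 1 * ‖v‖) (h32l : ∀ v : Eu s, Alow 2 1 * ‖v‖ ≤ ‖A32 v‖)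
    (h33u : ∀ v : Eu c, ‖A33 v‖ ≤ Abar 2 2 * ‖v‖) (h33l : ∀ v : Eu c, Alow 2 2 * ‖v‖ ≤ ‖A33 v‖)
    (p : Pt u s c) :
    Qf (((Cmat Abar Alow).mulVec ![γ.1, γ.2.1, γ.2.2] 0,
         (Cmat Abar Alow).mulVec ![γ.1, γ.2.1, γ.2.2] 1,
         (Cmat Abar Alow).mulVec ![γ.1, γ.2.1, γ.2.2] 2) : ℝ × ℝ × ℝ) p ≤
      Qf γ ((A11 p.1 + A12 p.2.1 + A13 p.2.2,
             A21 p.1 + A22 p.2.1 + A23 p.2.2,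
             A31 p.1 + A32 p.2.1 + A33 p.2.2) : Pt u s c) := by
  obtain ⟨x, y, θ⟩ := p
  obtain ⟨a, b, cc⟩ := γ
  simp only at ha hbneg hcneg
  set r1 := ‖x‖ with hr1
  set r2 := ‖y‖ with hr2
  set r3 := ‖θ‖ with hr3
  have hr1n : 0 ≤ r1 := norm_nonneg x
  have hr2n : 0 ≤ r2 := norm_nonneg y
  have hr3n : 0 ≤ r3 := norm_nonneg θ
  -- block 1 lower bound
  have L1 : (Alow 0 0 * r1) ^ 2 + (Alow 0 1 * r2) ^ 2 + (Alow 0 2 * r3) ^ 2 -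
      2 * ((Abar 0 0 * r1) * (Abar 0 1 * r2) + (Abar 0 0 * r1) * (Abar 0 2 * r3) +
        (Abar 0 1 * r2) * (Abar 0 2 * r3)) ≤ ‖A11 x + A12 y + A13 θ‖ ^ 2 := by
    have h := norm_add3_sq_ge (A11 x) (A12 y) (A13 θ)
    have e1 : (Alow 0 0 * r1) ^ 2 ≤ ‖A11 x‖ ^ 2 :=
      pow_le_pow_left₀ (mul_nonneg (hAlowNN 0 0) hr1n) (h11l x) 2
    have e2 : (Alow 0 1 * r2) ^ 2 ≤ ‖A12 y‖ ^ 2 :=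
      pow_le_pow_left₀ (mul_nonneg (hAlowNN 0 1) hr2n) (h12l y) 2
    have e3 : (Alow 0 2 * r3) ^ 2 ≤ ‖A13 θ‖ ^ 2 :=
      pow_le_pow_left₀ (mul_nonneg (hAlowNN 0 2) hr3n) (h13l θ) 2
    have m1 : ‖A11 x‖ * ‖A12 y‖ ≤ (Abar 0 0 * r1) * (Abar 0 1 * r2) :=
      mul_le_mul (h11u x) (h12u y) (norm_nonneg _) (mul_nonneg (hAbarNN 0 0) hr1n)
    have m2 : ‖A11 x‖ * ‖A13 θ‖ ≤ (Abar 0 0 * r1) * (Abar 0 2 * r3) :=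
      mul_le_mul (h11u x) (h13u θ) (norm_nonneg _) (mul_nonneg (hAbarNN 0 0) hr1n)
    have m3 : ‖A12 y‖ * ‖A13 θ‖ ≤ (Abar 0 1 * r2) * (Abar 0 2 * r3) :=
      mul_le_mul (h12u y) (h13u θ) (norm_nonneg _) (mul_nonneg (hAbarNN 0 1) hr2n)
    linarith
  -- block 2 upper bound
  have U2 : ‖A21 x + A22 y + A23 θ‖ ^ 2 ≤
      (Abar 1 0 * r1 + Abar 1 1 * r2 + Abar 1 2 * r3) ^ 2 := by
    refine pow_le_pow_left₀ (norm_nonneg _) ?_ 2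
    calc ‖A21 x + A22 y + A23 θ‖ ≤ ‖A21 x + A22 y‖ + ‖A23 θ‖ := norm_add_le _ _
      _ ≤ ‖A21 x‖ + ‖A22 y‖ + ‖A23 θ‖ := by linarith [norm_add_le (A21 x) (A22 y)]
      _ ≤ Abar 1 0 * r1 + Abar 1 1 * r2 + Abar 1 2 * r3 := by
          linarith [h21u x, h22u y, h23u θ]
  have U3 : ‖A31 x + A32 y + A33 θ‖ ^ 2 ≤
      (Abar 2 0 * r1 + Abar 2 1 * r2 + Abar 2 2 * r3) ^ 2 := by
    refine pow_le_pow_left₀ (norm_nonneg _) ?_ 2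
    calc ‖A31 x + A32 y + A33 θ‖ ≤ ‖A31 x + A32 y‖ + ‖A33 θ‖ := norm_add_le _ _
      _ ≤ ‖A31 x‖ + ‖A32 y‖ + ‖A33 θ‖ := by linarith [norm_add_le (A31 x) (A32 y)]
      _ ≤ Abar 2 0 * r1 + Abar 2 1 * r2 + Abar 2 2 * r3 := by
          linarith [h31u x, h32u y, h33u θ]
  have ka : a * ((Alow 0 0 * r1) ^ 2 + (Alow 0 1 * r2) ^ 2 + (Alow 0 2 * r3) ^ 2 -
      2 * ((Abar 0 0 * r1) * (Abar 0 1 * r2) + (Abar 0 0 * r1) * (Abar 0 2 * r3) +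
        (Abar 0 1 * r2) * (Abar 0 2 * r3))) ≤ a * ‖A11 x + A12 y + A13 θ‖ ^ 2 :=
    mul_le_mul_of_nonneg_left L1 ha
  have kb : b * ((Abar 1 0 * r1 + Abar 1 1 * r2 + Abar 1 2 * r3) ^ 2) ≤
      b * ‖A21 x + A22 y + A23 θ‖ ^ 2 := mul_le_mul_of_nonpos_left U2 hbneg
  have kc : cc * ((Abar 2 0 * r1 + Abar 2 1 * r2 + Abar 2 2 * r3) ^ 2) ≤
      cc * ‖A31 x + A32 y + A33 θ‖ ^ 2 := mul_le_mul_of_nonpos_left U3 hcneg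
  simp only [Qf, Cmat, Matrix.mulVec, dotProduct, Fin.sum_univ_three,
    Matrix.cons_val_zero, Matrix.cons_val_one, Matrix.head_cons, Matrix.cons_val_two,
    Matrix.tail_cons, Matrix.head_fin_const, Matrix.of_apply, Matrix.cons_val', Matrix.empty_val',
    Matrix.cons_val_fin_one]
  rw [← hr1, ← hr2, ← hr3]
  nlinarith [mul_nonneg (mul_nonneg ha (mul_nonneg (hAbarNN 0 0) (hAbarNN 0 1))) (sq_nonneg (r1 - r2)),
    mul_nonneg (mul_nonneg ha (mul_nonneg (hAbarNN 0 0) (hAbarNN 0 2))) (sq_nonneg (r1 - r3)),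
    mul_nonneg (mul_nonneg ha (mul_nonneg (hAbarNN 0 1) (hAbarNN 0 2))) (sq_nonneg (r2 - r3)),
    mul_nonpos_of_nonpos_of_nonneg hbneg (mul_nonneg (mul_nonneg (hAbarNN 1 0) (hAbarNN 1 1)) (sq_nonneg (r1 - r2))),
    mul_nonpos_of_nonpos_of_nonneg hbneg (mul_nonneg (mul_nonneg (hAbarNN 1 0) (hAbarNN 1 2)) (sq_nonneg (r1 - r3))),
    mul_nonpos_of_nonpos_of_nonneg hbneg (mul_nonneg (mul_nonneg (hAbarNN 1 1) (hAbarNN 1 2)) (sq_nonneg (r2 - r3))),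
    mul_nonpos_of_nonpos_of_nonneg hcneg (mul_nonneg (mul_nonneg (hAbarNN 2 0) (hAbarNN 2 1)) (sq_nonneg (r1 - r2))),
    mul_nonpos_of_nonpos_of_nonneg hcneg (mul_nonneg (mul_nonneg (hAbarNN 2 0) (hAbarNN 2 2)) (sq_nonneg (r1 - r3))),
    mul_nonpos_of_nonpos_of_nonneg hcneg (mul_nonneg (mul_nonneg (hAbarNN 2 1) (hAbarNN 2 2)) (sq_nonneg (r2 - r3)))]
end
end

section
/- Let r > 0, n ≥ 1, and let h : [0,r] → ℝ be (n+1)-times continuously differentiable. Define the polynomials p̄(θ) := Σ_{j=0}^{n−1} (h⁽ʲ⁾(0)/j!)·θʲ + (1/n!)·[h⁽ⁿ⁾(0) + (1/(n+1))·sup_{v,w ∈ [0,r]} h⁽ⁿ⁺¹⁾(v)·w]·θⁿ and p̲(θ) := Σ_{j=0}^{n−1} (h⁽ʲ⁾(0)/j!)·θʲ + (1/n!)·[h⁽ⁿ⁾(0) + (1/(n+1))·inf_{v,w ∈ [0,r]} h⁽ⁿ⁺¹⁾(v)·w]·θⁿ. Then p̲(θ) ≤ h(θ) ≤ p̄(θ)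 for every θ ∈ [0,r]. -/
open Set

noncomputable section

lemma iteratedDerivWithin_congr_set' {f : ℝ → ℝ} {s t : Set ℝ} {x : ℝ}
    (hst : s =ᶠ[nhds x] t) (m : ℕ) :
    iteratedDerivWithin m f s x = iteratedDerivWithin m f t x := by
  simp only [iteratedDerivWithin_eq_iteratedFDerivWithin,
    iteratedFDerivWithin_congr_set hst m]


/-- Taylor polynomial enclosures.
For an `(n+1)`-times continuously differentiable `h : [0,r] → ℝ`, the polynomials `p̄` and `p̲`
obtained from the Taylor expansion at `0`, with the `θⁿ` coefficient corrected by
`sup`/`inf` of `h⁽ⁿ⁺¹⁾(v)·w` over `v,w ∈ [0,r]`, enclose `h` on `[0,r]`. -/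
theorem stmt15 (r : ℝ) (hr : 0 < r) (n : ℕ) (hn : 1 ≤ n) (h : ℝ → ℝ)
    (hh : ContDiffOn ℝ (n + 1 : ℕ) h (Set.Icc 0 r)) :
    ∀ θ ∈ Set.Icc (0 : ℝ) r,
      (∑ j ∈ Finset.range n,
          (iteratedDerivWithin j h (Set.Icc 0 r) 0 / (j.factorial : ℝ)) * θ ^ j) +
        (1 / (n.factorial : ℝ)) *
          (iteratedDerivWithin n h (Set.Icc 0 r) 0 +
            (1 / ((n : ℝ) + 1)) *
              sInf {x : ℝ | ∃ v ∈ Set.Icc (0 : ℝ) r, ∃ w ∈ Set.Icc (0 : ℝ) r,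
                x = iteratedDerivWithin (n + 1) h (Set.Icc 0 r) v * w}) * θ ^ n
        ≤ h θ ∧
      h θ ≤
        (∑ j ∈ Finset.range n,
            (iteratedDerivWithin j h (Set.Icc 0 r) 0 / (j.factorial : ℝ)) * θ ^ j) +
          (1 / (n.factorial : ℝ)) *
            (iteratedDerivWithin n h (Set.Icc 0 r) 0 +
              (1 / ((n : ℝ) + 1)) *
                sSup {x : ℝ | ∃ v ∈ Set.Icc (0 : ℝ) r, ∃ w ∈ Set.Icc (0 : ℝ) r,
                  x = iteratedDerivWithin (n + 1) h (Set.Icc 0 r) v * w}) * θ ^ n := by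
  intro θ hθ
  set g : ℝ → ℝ := iteratedDerivWithin (n + 1) h (Set.Icc 0 r) with hg
  set S : Set ℝ := {x : ℝ | ∃ v ∈ Set.Icc (0 : ℝ) r, ∃ w ∈ Set.Icc (0 : ℝ) r,
      x = g v * w} with hS
  -- S is the image of a compact set under a continuous map
  have hSim : S = (fun p : ℝ × ℝ => g p.1 * p.2) '' (Set.Icc 0 r ×ˢ Set.Icc 0 r) := by
    ext x
    constructor
    · rintro ⟨v, hv, w, hw, rfl⟩
      exact ⟨(v, w), ⟨hv, hw⟩, rfl⟩
    · rintro ⟨⟨v, w⟩, ⟨hv, hw⟩, rfl⟩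
      exact ⟨v, hv, w, hw, rfl⟩
  have hgc : ContinuousOn g (Set.Icc 0 r) :=
    hh.continuousOn_iteratedDerivWithin le_rfl (uniqueDiffOn_Icc hr)
  have hcomp : IsCompact ((fun p : ℝ × ℝ => g p.1 * p.2) '' (Set.Icc 0 r ×ˢ Set.Icc 0 r)) := by
    apply (isCompact_Icc.prod isCompact_Icc).image_of_continuousOn
    exact (hgc.comp continuous_fst.continuousOn (fun p hp => hp.1)).mul
      continuous_snd.continuousOn
  have hSne : S.Nonempty := ⟨g 0 * 0, 0, Set.left_mem_Icc.2 hr.le, 0, Set.left_mem_Icc.2 hr.le, rfl⟩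
  have hbdd : BddBelow S ∧ BddAbove S := by
    rw [hSim]; exact ⟨hcomp.bddBelow, hcomp.bddAbove⟩
  have hmemS : ∀ v ∈ Set.Icc (0:ℝ) r, ∀ w ∈ Set.Icc (0:ℝ) r, g v * w ∈ S :=
    fun v hv w hw => ⟨v, hv, w, hw, rfl⟩
  have hfacn : (0:ℝ) < (n.factorial : ℝ) := by positivity
  have hfacn1 : ((n+1).factorial : ℝ) = ((n:ℝ)+1) * (n.factorial : ℝ) := by
    rw [Nat.factorial_succ]; push_cast; ring
  have hn1 : (0:ℝ) < (n:ℝ) + 1 := by positivity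
  rcases eq_or_lt_of_le hθ.1 with h0 | hθ0
  · -- θ = 0
    subst h0
    have hsum : ∀ c : ℝ, (∑ j ∈ Finset.range n,
        (iteratedDerivWithin j h (Set.Icc 0 r) 0 / (j.factorial : ℝ)) * (0:ℝ) ^ j) +
        (1 / (n.factorial : ℝ)) * c * (0:ℝ) ^ n = h 0 := by
      intro c
      rw [zero_pow (by omega : n ≠ 0), Finset.sum_eq_single 0]
      · simp
      · intro b _ hb
        rw [zero_pow hb, mul_zero]
      · intro habs; exact absurd (Finset.mem_range.2 (by omega)) habs
    constructor
    · rw [hsum]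
    · rw [hsum]
  · -- θ > 0
    have hcd : ContDiffOn ℝ (n + 1 : ℕ) h (Set.Icc 0 θ) :=
      hh.mono (Set.Icc_subset_Icc le_rfl hθ.2)
    have hf : ContDiffOn ℝ n h (Set.Icc 0 θ) := hcd.of_le (by exact_mod_cast Nat.le_succ n)
    have hf' : DifferentiableOn ℝ (iteratedDerivWithin n h (Set.Icc 0 θ)) (Set.Ioo 0 θ) :=
      (hcd.differentiableOn_iteratedDerivWithin (by exact_mod_cast Nat.lt_succ_self n)
        (uniqueDiffOn_Icc hθ0)).mono Set.Ioo_subset_Icc_self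
    obtain ⟨x', hx', heq⟩ := taylor_mean_remainder_lagrange hθ0.ne (by rwa [Set.uIcc_of_le hθ0.le])
      (by rwa [Set.uIcc_of_le hθ0.le, Set.uIoo_of_le hθ0.le])
    rw [Set.uIcc_of_le hθ0.le] at heq
    rw [Set.uIoo_of_le hθ0.le] at hx'
    -- set congruence on Ico 0 θ
    have hev : ∀ x ∈ Set.Ico (0:ℝ) θ, Set.Icc (0:ℝ) θ =ᶠ[nhds x] Set.Icc (0:ℝ) r := by
      intro x hx
      rw [Filter.eventuallyEq_set]
      filter_upwards [Metric.ball_mem_nhds x (sub_pos.2 hx.2)] with y hy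
      rw [Metric.mem_ball, Real.dist_eq, abs_lt] at hy
      constructor
      · rintro ⟨h1, h2⟩; exact ⟨h1, h2.trans hθ.2⟩
      · rintro ⟨h1, _⟩; exact ⟨h1, by linarith [hy.2, hx.2]⟩
    have hit : ∀ m : ℕ, ∀ x ∈ Set.Ico (0:ℝ) θ,
        iteratedDerivWithin m h (Set.Icc 0 θ) x = iteratedDerivWithin m h (Set.Icc 0 r) x :=
      fun m x hx => iteratedDerivWithin_congr_set' (hev x hx) m
    have h0mem : (0:ℝ) ∈ Set.Ico (0:ℝ) θ := ⟨le_rfl, hθ0⟩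
    have hx'mem : x' ∈ Set.Ico (0:ℝ) θ := ⟨hx'.1.le, hx'.2⟩
    have hx'Icc : x' ∈ Set.Icc (0:ℝ) r := ⟨hx'.1.le, hx'.2.le.trans hθ.2⟩
    rw [taylor_within_apply] at heq
    have hTsum : (∑ k ∈ Finset.range (n + 1), (((k.factorial : ℝ))⁻¹ * (θ - 0) ^ k) •
        iteratedDerivWithin k h (Set.Icc 0 θ) 0) =
        (∑ j ∈ Finset.range n,
          (iteratedDerivWithin j h (Set.Icc 0 r) 0 / (j.factorial : ℝ)) * θ ^ j) +
          iteratedDerivWithin n h (Set.Icc 0 r) 0 / (n.factorial : ℝ) * θ ^ n := by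
      rw [Finset.sum_range_succ]
      congr 1
      · apply Finset.sum_congr rfl
        intro j hj
        rw [hit j 0 h0mem]
        simp [smul_eq_mul, div_eq_inv_mul]
        ring
      · rw [hit n 0 h0mem]
        simp [smul_eq_mul, div_eq_inv_mul]
        ring
    rw [hTsum, hit (n+1) x' hx'mem] at heq
    set A := ∑ j ∈ Finset.range n,
        (iteratedDerivWithin j h (Set.Icc 0 r) 0 / (j.factorial : ℝ)) * θ ^ j with hA
    set d := iteratedDerivWithin n h (Set.Icc 0 r) 0 with hd
    -- h θ = A + d/n! θ^n + (g x' * θ) * θ^n / (n+1)!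
    have key : h θ = A + d / (n.factorial : ℝ) * θ ^ n +
        (g x' * θ) * θ ^ n / ((n+1).factorial : ℝ) := by
      have : g x' * (θ - 0) ^ (n + 1) / ((n+1).factorial : ℝ) =
          (g x' * θ) * θ ^ n / ((n+1).factorial : ℝ) := by
        rw [sub_zero, pow_succ]; ring
      rw [← hg] at heq
      linarith [heq, this]
    have hpow : (0:ℝ) ≤ θ ^ n := by positivity
    have hfacpos : (0:ℝ) < ((n+1).factorial : ℝ) := by positivity
    have hmemx : g x' * θ ∈ S := hmemS x' hx'Icc θ hθ
    have hinf : sInf S ≤ g x' * θ := csInf_le hbdd.1 hmemx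
    have hsup : g x' * θ ≤ sSup S := le_csSup hbdd.2 hmemx
    have hexp : ∀ c : ℝ, A + (1 / (n.factorial : ℝ)) * (d + (1 / ((n:ℝ) + 1)) * c) * θ ^ n =
        A + d / (n.factorial : ℝ) * θ ^ n + c * θ ^ n / ((n+1).factorial : ℝ) := by
      intro c
      rw [hfacn1]
      field_simp
      ring
    have hIle : sInf S * θ ^ n ≤ (g x' * θ) * θ ^ n := mul_le_mul_of_nonneg_right hinf hpow
    have hSle : (g x' * θ) * θ ^ n ≤ sSup S * θ ^ n := mul_le_mul_of_nonneg_right hsup hpow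
    have hIdiv : sInf S * θ ^ n / ((n+1).factorial : ℝ) ≤
        (g x' * θ) * θ ^ n / ((n+1).factorial : ℝ) := by
      gcongr
    have hSdiv : (g x' * θ) * θ ^ n / ((n+1).factorial : ℝ) ≤
        sSup S * θ ^ n / ((n+1).factorial : ℝ) := by
      gcongr
    constructor
    · rw [key, hexp]; linarith
    · rw [key, hexp]; linarith
end
end

section
/- Let a₀ and ε be real numbers with 0 < ε < a₀ − 1. Then ∫₀¹ (1/2)·log(4·(a₀ − 1 + ε·sin(2πθ))) dθ = (1/2)·log(2·(a₀ − 1 + √((a₀−1)² − ε²))). -/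
open Real

noncomputable section

open intervalIntegral

namespace S16

noncomputable def f (w : ℂ) (t : ℝ) : ℝ :=
  Real.log ‖1 - w * Complex.exp (t * Complex.I)‖

noncomputable def J (w : ℂ) : ℝ := ∫ t in (0:ℝ)..(2*π), f w t

lemma ne_zero' {w : ℂ} (hw : ‖w‖ < 1) (t : ℝ) :
    1 - w * Complex.exp (t * Complex.I) ≠ 0 := by
  intro h
  have h1 : ‖w * Complex.exp (t * Complex.I)‖ = ‖w‖ := by
    rw [norm_mul, Complex.norm_exp_ofReal_mul_I, mul_one]
  have h2 : (1 : ℂ) = w * Complex.exp (t * Complex.I) := by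
    linear_combination h
  rw [← h2] at h1
  simp at h1
  exact absurd h1.symm (ne_of_lt hw)

lemma cont {w : ℂ} (hw : ‖w‖ < 1) : Continuous (f w) := by
  apply Continuous.log
  · exact continuous_norm.comp (continuous_const.sub (continuous_const.mul
      (Complex.continuous_exp.comp (Complex.continuous_ofReal.mul continuous_const))))
  · intro t
    exact norm_ne_zero_iff.mpr (ne_zero' hw t)

lemma intble {w : ℂ} (hw : ‖w‖ < 1) (a b : ℝ) :
    IntervalIntegrable (f w) MeasureTheory.volume a b :=
  (cont hw).intervalIntegrable a b

lemma periodic (w : ℂ) : Function.Periodic (f w) (2*π) := by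
  intro t
  unfold f
  congr 3
  push_cast
  rw [add_mul, Complex.exp_add]
  simp [Complex.exp_two_pi_mul_I]

lemma f_shift (w : ℂ) (t : ℝ) : f (-w) t = f w (t + π) := by
  unfold f
  congr 2
  push_cast
  rw [add_mul, Complex.exp_add, Complex.exp_pi_mul_I]
  ring

lemma J_neg {w : ℂ} (hw : ‖w‖ < 1) : J (-w) = J w := by
  have h : J (-w) = ∫ t in (0:ℝ)..(2*π), f w (t + π) := by
    unfold J; exact integral_congr fun t _ => f_shift w t
  rw [h, integral_comp_add_right (f w) π]
  have := (periodic w).intervalIntegral_add_eq π 0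
  simpa [add_comm, J] using this

lemma J_sq {w : ℂ} (hw : ‖w‖ < 1) : 2 * J w = J (w^2) := by
  have hw2 : ‖w^2‖ < 1 := by
    rw [norm_pow]; exact pow_lt_one₀ (norm_nonneg w) hw (by norm_num)
  have hfun : ∀ t : ℝ, f w t + f (-w) t = f (w^2) (2*t) := by
    intro t
    unfold f
    rw [← Real.log_mul (norm_ne_zero_iff.mpr (ne_zero' hw t))
      (norm_ne_zero_iff.mpr (ne_zero' (w := -w) (by simpa using hw) t)), ← norm_mul]
    congr 2
    have he : Complex.exp ((2*t : ℝ) * Complex.I) = Complex.exp (t * Complex.I) ^ 2 := by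
      rw [← Complex.exp_nat_mul]
      push_cast
      ring_nf
    rw [he]
    ring
  have h1 : J w + J (-w) = ∫ t in (0:ℝ)..(2*π), f (w^2) (2*t) := by
    unfold J
    rw [← integral_add (intble hw 0 (2*π)) (intble (by simpa using hw) 0 (2*π))]
    exact integral_congr fun t _ => hfun t
  rw [integral_comp_mul_left (f (w^2)) (two_ne_zero)] at h1
  have h2 : ∫ t in (2*(0:ℝ))..(2*(2*π)), f (w^2) t = 2 * J (w^2) := by
    have h4 : (2*(2*π)) = 2*π + 2*π := by ring
    rw [mul_zero, h4,
      (periodic (w^2)).intervalIntegral_add_eq_add 0 (2*π) (intble hw2)]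
    have := (periodic (w^2)).intervalIntegral_add_eq 0 0
    unfold J
    simp only [zero_add]
    ring
  rw [h2] at h1
  rw [J_neg hw] at h1
  rw [smul_eq_mul] at h1
  linarith

lemma J_pow {w : ℂ} (hw : ‖w‖ < 1) : ∀ n : ℕ, J w = J (w^(2^n)) / 2^n := by
  intro n
  induction n generalizing w with
  | zero => simp
  | succ n ih =>
    have hw2 : ‖w^2‖ < 1 := by
      rw [norm_pow]; exact pow_lt_one₀ (norm_nonneg w) hw (by norm_num)
    have h1 : J w = J (w^2) / 2 := by have := J_sq hw; linarith
    rw [h1, ih hw2, ← pow_mul]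
    rw [show 2 * 2^n = 2^(n+1) by ring]
    ring

lemma abs_f_le {ρ : ℝ} (hρ1 : ρ < 1) {w : ℂ} (hwρ : ‖w‖ ≤ ρ) (t : ℝ) :
    |f w t| ≤ -Real.log (1 - ρ) := by
  have hρ0 : 0 ≤ ρ := le_trans (norm_nonneg w) hwρ
  have h1ρ : 0 < 1 - ρ := by linarith
  set x := ‖1 - w * Complex.exp (t * Complex.I)‖ with hx
  have habs : ‖w * Complex.exp (t * Complex.I)‖ ≤ ρ := by
    rw [norm_mul, Complex.norm_exp_ofReal_mul_I, mul_one]; exact hwρ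
  have hx1 : 1 - ρ ≤ x := by
    have := norm_sub_norm_le (1 : ℂ) (w * Complex.exp (t * Complex.I))
    simp only [norm_one] at this
    linarith
  have hx2 : x ≤ 1 + ρ := by
    have := norm_sub_le (1 : ℂ) (w * Complex.exp (t * Complex.I))
    simp only [norm_one] at this
    linarith
  have hx0 : 0 < x := lt_of_lt_of_le h1ρ hx1
  have hfx : f w t = Real.log x := rfl
  rw [hfx, abs_le]
  constructor
  · have h := Real.log_le_log h1ρ hx1
    linarith
  · have h := Real.log_le_log hx0 hx2
    have h2 : Real.log (1+ρ) ≤ -Real.log (1-ρ) := by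
      rw [← Real.log_inv]
      apply Real.log_le_log (by positivity)
      rw [inv_eq_one_div, le_div_iff₀ h1ρ]
      nlinarith
    linarith

lemma key {w : ℂ} (hw : ‖w‖ < 1) : J w = 0 := by
  set ρ := ‖w‖ with hρ
  have hρ0 : 0 ≤ ρ := norm_nonneg w
  set C := -Real.log (1-ρ) with hC
  have hC0 : 0 ≤ C := by
    have := Real.log_nonpos (x := 1 - ρ) (by linarith) (by linarith)
    linarith
  have hb : ∀ n : ℕ, |J w| ≤ (C * (2*π)) / 2^n := by
    intro n
    rw [J_pow hw n, abs_div]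
    have hu : ‖w^(2^n)‖ ≤ ρ := by
      rw [norm_pow]
      exact pow_le_of_le_one hρ0 hw.le (by positivity)
    have hbd := intervalIntegral.norm_integral_le_of_norm_le_const
      (C := C) (f := f (w^(2^n))) (a := 0) (b := 2*π)
      (fun t _ => by simpa [Real.norm_eq_abs] using abs_f_le hw hu t)
    rw [Real.norm_eq_abs] at hbd
    have hpi : |2*π - 0| = 2*π := by
      rw [sub_zero, abs_of_pos (by positivity)]
    rw [hpi] at hbd
    have h2n : |(2:ℝ)^n| = 2^n := abs_of_pos (by positivity)
    rw [h2n]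
    exact div_le_div_of_nonneg_right hbd (by positivity) |>.trans_eq rfl
  have hlim : Filter.Tendsto (fun n : ℕ => (C * (2*π)) / 2^n) Filter.atTop (nhds 0) := by
    have h := tendsto_pow_atTop_nhds_zero_of_lt_one (r := (1/2:ℝ)) (by norm_num) (by norm_num)
    have := h.const_mul (C * (2*π))
    rw [mul_zero] at this
    convert this using 2 with n
    rw [div_pow, one_pow, mul_one_div]
  have : |J w| ≤ 0 := ge_of_tendsto hlim (Filter.Eventually.of_forall hb)
  exact abs_nonpos_iff.mp this

end S16

open S16 in
/-- average of the Lyapunov-exponent integrand.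
For `0 < ε < a₀ - 1`,
`∫₀¹ ½ log(4(a₀ - 1 + ε sin(2πθ))) dθ = ½ log(2(a₀ - 1 + √((a₀-1)² - ε²)))`. -/
theorem stmt16 (a₀ ε : ℝ) (hε : 0 < ε) (hεa : ε < a₀ - 1) :
    ∫ θ in (0 : ℝ)..1,
        (1 / 2) * Real.log (4 * (a₀ - 1 + ε * Real.sin (2 * Real.pi * θ))) =
      (1 / 2) * Real.log (2 * (a₀ - 1 + Real.sqrt ((a₀ - 1) ^ 2 - ε ^ 2))) := by
  set b := a₀ - 1 with hbdef
  have hb : 0 < b := lt_trans hε hεa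
  set s := Real.sqrt (b^2 - ε^2) with hsdef
  have hd : 0 < b^2 - ε^2 := by nlinarith
  have hs0 : 0 < s := Real.sqrt_pos.mpr hd
  have hs2 : s^2 = b^2 - ε^2 := Real.sq_sqrt hd.le
  have hsb : s < b := by nlinarith
  set p := Real.sqrt ((b+s)/2) with hpdef
  set q := Real.sqrt ((b-s)/2) with hqdef
  have hp2 : p^2 = (b+s)/2 := Real.sq_sqrt (by linarith)
  have hq2 : q^2 = (b-s)/2 := Real.sq_sqrt (by linarith)
  have hp0 : 0 < p := Real.sqrt_pos.mpr (by linarith)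
  have hq0 : 0 ≤ q := Real.sqrt_nonneg _
  have hqp : q < p := by
    have h : q^2 < p^2 := by rw [hp2, hq2]; linarith
    exact lt_of_pow_lt_pow_left₀ 2 hp0.le h
  have hsq : (p*q)^2 = (ε/2)^2 := by
    rw [mul_pow, hp2, hq2]
    linear_combination (-1/4 : ℝ) * hs2
  have hpq : p * q = ε/2 := by
    have h2 : Real.sqrt ((p*q)^2) = Real.sqrt ((ε/2)^2) := by rw [hsq]
    rwa [Real.sqrt_sq (mul_nonneg hp0.le hq0), Real.sqrt_sq (by linarith)] at h2
  set c := q / p with hc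
  have hc0 : 0 ≤ c := div_nonneg hq0 hp0.le
  have hc1 : c < 1 := (div_lt_one hp0).mpr hqp
  set w : ℂ := Complex.I * (c : ℂ) with hwdef
  have hw : ‖w‖ < 1 := by
    rw [hwdef, norm_mul, Complex.norm_I, one_mul, Complex.norm_real, Real.norm_eq_abs, abs_of_nonneg hc0]
    exact hc1
  have hcq : p * c = q := by rw [hc]; field_simp
  have habs2 : ∀ t : ℝ, ‖1 - w * Complex.exp (t*Complex.I)‖^2
      = 1 + c^2 + 2*c*Real.sin t := by
    intro t
    rw [Complex.sq_norm]
    simp only [hwdef, Complex.normSq_apply, Complex.sub_re, Complex.sub_im, Complex.mul_re,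
      Complex.mul_im, Complex.I_re, Complex.I_im, Complex.ofReal_re, Complex.ofReal_im,
      Complex.exp_ofReal_mul_I_re, Complex.exp_ofReal_mul_I_im, Complex.one_re, Complex.one_im]
    have := Real.sin_sq_add_cos_sq t
    nlinarith [this]
  have hpoint : ∀ θ : ℝ, (1/2) * Real.log (4 * (b + ε * Real.sin (2*π*θ)))
      = (1/2) * Real.log (4*p^2) + f w (2*π*θ) := by
    intro θ
    have h4 : 4 * (b + ε * Real.sin (2*π*θ))
        = (4*p^2) * ‖1 - w * Complex.exp ((2*π*θ : ℝ)*Complex.I)‖^2 := by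
      rw [habs2 (2*π*θ)]
      have hexp : 4*p^2*(1 + c^2 + 2*c*Real.sin (2*π*θ))
          = 4*(p^2 + (p*c)^2 + 2*(p*(p*c))*Real.sin (2*π*θ)) := by ring
      rw [hexp, hcq]
      linear_combination (-4)*hp2 + (-4)*hq2 + (-8*Real.sin (2*π*θ))*hpq
    rw [h4, Real.log_mul (mul_ne_zero (by norm_num) (pow_ne_zero 2 hp0.ne'))
      (pow_ne_zero 2 (norm_ne_zero_iff.mpr (ne_zero' hw (2*π*θ)))),
      Real.log_pow]
    unfold f
    push_cast
    ring
  have hπ : (0:ℝ) < π := Real.pi_pos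
  have hcont : Continuous fun θ : ℝ => f w (2*π*θ) :=
    (cont hw).comp (continuous_const.mul continuous_id)
  calc ∫ θ in (0:ℝ)..1, (1/2) * Real.log (4 * (b + ε * Real.sin (2*π*θ)))
      = ∫ θ in (0:ℝ)..1, ((1/2) * Real.log (4*p^2) + f w (2*π*θ)) :=
        integral_congr fun θ _ => hpoint θ
    _ = (∫ _ in (0:ℝ)..1, (1/2) * Real.log (4*p^2)) + ∫ θ in (0:ℝ)..1, f w (2*π*θ) :=
        integral_add (intervalIntegrable_const) (hcont.intervalIntegrable 0 1)
    _ = (1/2) * Real.log (4*p^2) + (2*π)⁻¹ • ∫ t in (2*π*0)..(2*π*1), f w t := by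
        rw [integral_const, integral_comp_mul_left (f w) (by positivity : (2*π) ≠ 0)]
        norm_num
    _ = (1/2) * Real.log (4*p^2) := by
        rw [mul_zero, mul_one]
        have : (∫ t in (0:ℝ)..(2*π), f w t) = 0 := key hw
        rw [this]
        simp
    _ = (1/2) * Real.log (2*(b+s)) := by
        congr 1
        rw [hp2]
        ring
end
end

section
/- Let γ₁ = (a₁,b₁,c₁) ∈ ℝ³ with a₁ > 0 and b₁, c₁ < 0, let r > 0, and let h : B̄_u(0,r) → ℝᵘ×ℝˢ×ℝᶜ be a map with π_x(h(x)) = x for all x and Q_{γ₁}(h(x*) − h(x**)) ≥ 0 for all x*, x** ∈ B̄_u(0,r). Set θ₀ := π_θ(h(0)). Then π_θ(h(B̄_u(0,r))) ⊂ B̄_c(θ₀, √(a₁/(−c₁))·r). -/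
open Metric Set

noncomputable section

/-- For a horizontal-disc-like map `h` with `π_x ∘ h = id` and increments in the cone
`Q_{γ₁} ≥ 0`, the `θ`-component of the image of `B̄_u(0,r)` stays in the ball of radius
`√(a₁/(-c₁))·r` around `θ₀ = π_θ(h(0))`. -/
theorem stmt19 {u s c : ℕ} (γ₁ : ℝ × ℝ × ℝ) (hγ₁ : ConePar γ₁) (r : ℝ) (hr : 0 < r)
    (h : Eu u → Pt u s c)
    (hproj : ∀ x ∈ closedBall (0 : Eu u) r, (h x).1 = x)
    (hcone : ∀ x₁ ∈ closedBall (0 : Eu u) r, ∀ x₂ ∈ closedBall (0 : Eu u) r,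
      0 ≤ Qf γ₁ (h x₁ - h x₂)) :
    ∀ x ∈ closedBall (0 : Eu u) r,
      (h x).2.2 ∈ closedBall ((h 0).2.2) (Real.sqrt (γ₁.1 / (-γ₁.2.2)) * r) := by
  intro x hx
  obtain ⟨ha, hb, hc⟩ := hγ₁
  have h0 : (0 : Eu u) ∈ closedBall (0 : Eu u) r := by
    simp [le_of_lt hr]
  have hQ := hcone x hx 0 h0
  rw [Qf] at hQ
  have hx1 : (h x - h 0).1 = x := by
    simp [hproj x hx, hproj 0 h0]
  have hy : γ₁.2.1 * ‖(h x - h 0).2.1‖ ^ 2 ≤ 0 :=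
    mul_nonpos_of_nonpos_of_nonneg hb.le (by positivity)
  have key : -γ₁.2.2 * ‖(h x - h 0).2.2‖ ^ 2 ≤ γ₁.1 * ‖x‖ ^ 2 := by
    rw [hx1] at hQ; nlinarith
  have hxr : ‖x‖ ≤ r := by simpa [mem_closedBall, dist_eq_norm] using hx
  have h2 : ‖(h x - h 0).2.2‖ ^ 2 ≤ (γ₁.1 / -γ₁.2.2) * r ^ 2 := by
    rw [div_mul_eq_mul_div, le_div_iff₀ (by linarith)]
    nlinarith [mul_le_mul_of_nonneg_left (pow_le_pow_left₀ (norm_nonneg x) hxr 2) ha.le]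
  have hnorm : ‖(h x - h 0).2.2‖ ≤ Real.sqrt (γ₁.1 / -γ₁.2.2) * r := by
    have := Real.sqrt_le_sqrt h2
    rwa [Real.sqrt_sq (norm_nonneg _), Real.sqrt_mul (div_nonneg ha.le (by linarith)), Real.sqrt_sq hr.le] at this
  simpa [mem_closedBall, dist_eq_norm] using hnorm
end
end
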